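/- Let N ≥ 1 and let ρ be a complex matrix indexed by (Fin N → Fin 2) that is Hermitian, positive semidefinite, and has trace 1. Then ρ is separable — i.e., there exist a finite index set, nonnegative reals p_k summing to 1, and for each k single-qubit density matrices ρᵏᵢ (2×2 Hermitian positive semidefinite of trace 1) with ρ = Σ_k p_k · ⊗_{i} ρᵏᵢ (the matrix with entries ∏_i ρᵏᵢ(b(i),b'(i))) — if and only if there exist such p_k and single-qubit density matrices ρᵏᵢ with Q_ρ(Ω) = Σ_k p_k ∏_{i} Q_{ρᵏᵢ}(θ_i,φ_i) for all Ω, where Q_ρ is the many-body Q function and Q_{ρᵏᵢ} are the single-qubit Q functions. -/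

import Mathlib

open Matrix Complex Real MeasureTheory
open scoped ComplexOrder

noncomputable section

/-- The spin coherent state |θ,φ⟩ = cos(θ/2)|0⟩ + e^{iφ} sin(θ/2)|1⟩. -/
def cohVec (θ φ : ℝ) : Fin 2 → ℂ :=
  ![((Real.cos (θ / 2) : ℝ) : ℂ),
    Complex.exp (Complex.I * (φ : ℂ)) * ((Real.sin (θ / 2) : ℝ) : ℂ)]

/-- The single-qubit Husimi Q function. -/
def Qfun (A : Matrix (Fin 2) (Fin 2) ℂ) (θ φ : ℝ) : ℂ :=
  (1 / (2 * Real.pi) : ℂ) *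
    ∑ k, ∑ l, (starRingEnd ℂ) (cohVec θ φ k) * A k l * cohVec θ φ l

/-- The N-qubit coherent state v(Ω). -/
def cohVecN (N : ℕ) (θ φ : Fin N → ℝ) : (Fin N → Fin 2) → ℂ :=
  fun b => ∏ i, cohVec (θ i) (φ i) (b i)

/-- The many-body Q function Q_ρ(Ω) = (1/(2π))^N ⟨v(Ω)|ρ|v(Ω)⟩. -/
def QfunN (N : ℕ) (ρ : Matrix (Fin N → Fin 2) (Fin N → Fin 2) ℂ)
    (θ φ : Fin N → ℝ) : ℂ :=
  (1 / (2 * Real.pi) : ℂ) ^ N *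
    ∑ b, ∑ b', (starRingEnd ℂ) (cohVecN N θ φ b) * ρ b b' * cohVecN N θ φ b'

def pts : Fin 4 → ℝ × ℝ := ![(0, 0), (Real.pi, 0), (Real.pi/2, 0), (Real.pi/2, Real.pi/2)]

lemma coh0 : cohVec 0 0 = ![1, 0] := by
  simp [cohVec]
lemma coh1 : cohVec Real.pi 0 = ![0, 1] := by
  simp [cohVec]
lemma coh2 : cohVec (Real.pi/2) 0 = ![((Real.sqrt 2/2 : ℝ) : ℂ), ((Real.sqrt 2/2 : ℝ) : ℂ)] := by
  have h : (Real.pi/2)/2 = Real.pi/4 := by ring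
  simp [cohVec, h, Real.cos_pi_div_four, Real.sin_pi_div_four]
lemma coh3 : cohVec (Real.pi/2) (Real.pi/2) = ![((Real.sqrt 2/2 : ℝ) : ℂ), Complex.I * ((Real.sqrt 2/2 : ℝ) : ℂ)] := by
  have h : (Real.pi/2)/2 = Real.pi/4 := by ring
  have he : Complex.exp (Complex.I * ((Real.pi/2 : ℝ) : ℂ)) = Complex.I := by
    rw [mul_comm, Complex.exp_mul_I, ← Complex.ofReal_cos, ← Complex.ofReal_sin]
    norm_num
  simp only [cohVec, h, Real.cos_pi_div_four, Real.sin_pi_div_four, he]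

/-- per-point coherent projector matrix entries -/
def Mm (j : Fin 4) (k l : Fin 2) : ℂ :=
  (starRingEnd ℂ) (cohVec (pts j).1 (pts j).2 k) * cohVec (pts j).1 (pts j).2 l

def cdual : Fin 2 → Fin 2 → Fin 4 → ℂ :=
  ![![![1,0,0,0], ![-(1-Complex.I)/2, -(1-Complex.I)/2, 1, -Complex.I]],
    ![![-(1+Complex.I)/2, -(1+Complex.I)/2, 1, Complex.I], ![0,1,0,0]]]

lemma sqrt2_sq : ((Real.sqrt 2 : ℝ) : ℂ)^2 = 2 := by
  rw [← Complex.ofReal_pow, Real.sq_sqrt] <;> norm_num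

lemma I_cube : Complex.I ^ 3 = -Complex.I := by
  rw [pow_succ, Complex.I_sq]; ring

lemma cdual_Mm (k l k' l' : Fin 2) :
    ∑ j, cdual k l j * Mm j k' l' = if k = k' ∧ l = l' then 1 else 0 := by
  fin_cases k <;> fin_cases l <;> fin_cases k' <;> fin_cases l' <;>
    simp [cdual, Mm, pts, Fin.sum_univ_four, coh0, coh1, coh2, coh3, Complex.conj_ofReal,
      map_ofNat] <;>
    ring_nf <;>
    simp [sqrt2_sq, Complex.I_sq, I_cube, map_ofNat] <;>
    ring_nf

/-- the sesquilinear form ⟨v(Ω)|A|v(Ω)⟩ -/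
def S (N : ℕ) (A : Matrix (Fin N → Fin 2) (Fin N → Fin 2) ℂ) (θ φ : Fin N → ℝ) : ℂ :=
  ∑ b, ∑ b', (starRingEnd ℂ) (cohVecN N θ φ b) * A b b' * cohVecN N θ φ b'

lemma S_apply (N : ℕ) (A : Matrix (Fin N → Fin 2) (Fin N → Fin 2) ℂ) (θ φ : Fin N → ℝ) :
    S N A θ φ = ∑ b, ∑ b', (∏ i, (starRingEnd ℂ) (cohVec (θ i) (φ i) (b i)) *
      cohVec (θ i) (φ i) (b' i)) * A b b' := by
  unfold S cohVecN
  refine Finset.sum_congr rfl fun b _ => Finset.sum_congr rfl fun b' _ => ?_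
  rw [map_prod, Finset.prod_mul_distrib]
  ring

/-- Q-form of a product matrix factorizes -/
lemma S_prod (N : ℕ) (σ : Fin N → Matrix (Fin 2) (Fin 2) ℂ) (θ φ : Fin N → ℝ) :
    S N (Matrix.of fun b b' => ∏ i, σ i (b i) (b' i)) θ φ =
      ∏ i, ∑ k, ∑ l, (starRingEnd ℂ) (cohVec (θ i) (φ i) k) * σ i k l *
        cohVec (θ i) (φ i) l := by
  have h1 : ∀ i : Fin N, (∑ k, ∑ l, (starRingEnd ℂ) (cohVec (θ i) (φ i) k) * σ i k l *
      cohVec (θ i) (φ i) l) = ∑ q : Fin 2 × Fin 2,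
        (starRingEnd ℂ) (cohVec (θ i) (φ i) q.1) * σ i q.1 q.2 * cohVec (θ i) (φ i) q.2 := by
    intro i; rw [Fintype.sum_prod_type]
  rw [Finset.prod_congr rfl fun i _ => h1 i, Finset.prod_univ_sum, S_apply,
    ← Fintype.sum_prod_type']
  refine Fintype.sum_equiv (Equiv.arrowProdEquivProdArrow (Fin N) (fun _ => Fin 2) (fun _ => Fin 2)).symm _ _ ?_
  intro p
  simp only [Equiv.arrowProdEquivProdArrow, Equiv.symm, Equiv.coe_fn_mk, Matrix.of_apply]
  rw [← Finset.prod_mul_distrib]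
  exact Finset.prod_congr rfl fun i _ => by ring


lemma sum3_comm {α β γ : Type*} [Fintype α] [Fintype β] [Fintype γ] (f : α → β → γ → ℂ) :
    ∑ a, ∑ b, ∑ c, f a b c = ∑ c, ∑ a, ∑ b, f a b c := by
  have h : ∀ a : α, ∑ b, ∑ c, f a b c = ∑ c, ∑ b, f a b c := fun a => Finset.sum_comm
  simp_rw [h]
  exact Finset.sum_comm

lemma S_linear (N n : ℕ) (p : Fin n → ℂ) (P : Fin n → Matrix (Fin N → Fin 2) (Fin N → Fin 2) ℂ)
    (θ φ : Fin N → ℝ) :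
    S N (∑ k, p k • P k) θ φ = ∑ k, p k * S N (P k) θ φ := by
  unfold S
  simp only [Matrix.sum_apply, Matrix.smul_apply, smul_eq_mul, Finset.mul_sum, Finset.sum_mul]
  rw [sum3_comm]
  refine Finset.sum_congr rfl fun k _ => Finset.sum_congr rfl fun b _ =>
    Finset.sum_congr rfl fun b' _ => by ring

lemma S_sub (N : ℕ) (A B : Matrix (Fin N → Fin 2) (Fin N → Fin 2) ℂ) (θ φ : Fin N → ℝ) :
    S N (A - B) θ φ = S N A θ φ - S N B θ φ := by
  unfold S
  rw [← Finset.sum_sub_distrib]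
  refine Finset.sum_congr rfl fun b _ => ?_
  rw [← Finset.sum_sub_distrib]
  refine Finset.sum_congr rfl fun b' _ => ?_
  simp [Matrix.sub_apply]; ring

/-- Injectivity: the coherent-state form determines the matrix. -/
lemma S_inj (N : ℕ) (A : Matrix (Fin N → Fin 2) (Fin N → Fin 2) ℂ)
    (h : ∀ θ φ : Fin N → ℝ, S N A θ φ = 0) : A = 0 := by
  ext b b'
  have key : A b b' = ∑ j : Fin N → Fin 4, (∏ i, cdual (b i) (b' i) (j i)) *
      S N A (fun i => (pts (j i)).1) (fun i => (pts (j i)).2) := by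
    have hS : ∀ j : Fin N → Fin 4,
        S N A (fun i => (pts (j i)).1) (fun i => (pts (j i)).2) =
        ∑ a, ∑ a', (∏ i, Mm (j i) (a i) (a' i)) * A a a' := by
      intro j; rw [S_apply]; rfl
    simp_rw [hS, Finset.mul_sum]
    rw [sum3_comm, sum3_comm]
    have hin : ∀ (a a' : Fin N → Fin 2), (∑ j : Fin N → Fin 4,
        (∏ i, cdual (b i) (b' i) (j i)) * ((∏ i, Mm (j i) (a i) (a' i)) * A a a')) =
        (if a = b ∧ a' = b' then (1:ℂ) else 0) * A a a' := by
      intro a a'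
      simp_rw [← mul_assoc]
      rw [← Finset.sum_mul]
      congr 1
      have : ∀ j : Fin N → Fin 4, (∏ i, cdual (b i) (b' i) (j i)) * (∏ i, Mm (j i) (a i) (a' i))
          = ∏ i, cdual (b i) (b' i) (j i) * Mm (j i) (a i) (a' i) :=
        fun j => (Finset.prod_mul_distrib).symm
      simp_rw [this]
      have hps := Finset.prod_univ_sum (t := fun _ : Fin N => (Finset.univ : Finset (Fin 4)))
        (f := fun i m => cdual (b i) (b' i) m * Mm m (a i) (a' i))
      rw [show (Finset.univ : Finset (Fin N → Fin 4)) =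
        Fintype.piFinset (fun _ => Finset.univ) from (Fintype.piFinset_univ).symm,
        ← hps]
      have : ∀ i : Fin N, (∑ m : Fin 4, cdual (b i) (b' i) m * Mm m (a i) (a' i)) =
          if b i = a i ∧ b' i = a' i then 1 else 0 := fun i => cdual_Mm _ _ _ _
      simp_rw [this]
      rw [Finset.prod_boole]
      by_cases hab : a = b ∧ a' = b'
      · simp [hab.1, hab.2]
      · have : ¬ ∀ i : Fin N, b i = a i ∧ b' i = a' i := by
          intro hc
          exact hab ⟨funext fun i => (hc i).1.symm, funext fun i => (hc i).2.symm⟩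
        simp [this, hab]
    simp_rw [hin]
    simp [Finset.sum_ite_eq, ite_and]
  simp only [h, mul_zero, Finset.sum_const_zero] at key
  simpa using key

lemma QfunN_eq (N : ℕ) (ρ : Matrix (Fin N → Fin 2) (Fin N → Fin 2) ℂ) (θ φ : Fin N → ℝ) :
    QfunN N ρ θ φ = (1 / (2 * Real.pi) : ℂ) ^ N * S N ρ θ φ := rfl

lemma QfunN_sep (N n : ℕ) (p : Fin n → ℝ) (σ : Fin n → Fin N → Matrix (Fin 2) (Fin 2) ℂ)
    (θ φ : Fin N → ℝ) :
    QfunN N (∑ k, (p k : ℂ) • Matrix.of (fun b b' => ∏ i, σ k i (b i) (b' i))) θ φ =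
      ∑ k, (p k : ℂ) * ∏ i, Qfun (σ k i) (θ i) (φ i) := by
  rw [QfunN_eq, S_linear]
  rw [Finset.mul_sum]
  refine Finset.sum_congr rfl fun k _ => ?_
  rw [S_prod]
  unfold Qfun
  rw [Finset.prod_mul_distrib, Finset.prod_const, Finset.card_univ, Fintype.card_fin]
  ring


/-- an N-qubit density matrix is separable if and only if its
many-body Q function admits a convex factorization into single-qubit Q functions. -/
theorem separability_iff_q_factorization (N : ℕ) (hN : 1 ≤ N)
    (ρ : Matrix (Fin N → Fin 2) (Fin N → Fin 2) ℂ)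
    (hherm : ρ.IsHermitian) (hpos : ρ.PosSemidef) (htr : ρ.trace = 1) :
    (∃ (n : ℕ) (p : Fin n → ℝ) (σ : Fin n → Fin N → Matrix (Fin 2) (Fin 2) ℂ),
      (∀ k, 0 ≤ p k) ∧ (∑ k, p k = 1) ∧
      (∀ k i, (σ k i).IsHermitian ∧ (σ k i).PosSemidef ∧ (σ k i).trace = 1) ∧
      ρ = ∑ k, (p k : ℂ) • Matrix.of (fun b b' => ∏ i, σ k i (b i) (b' i)))
    ↔
    (∃ (n : ℕ) (p : Fin n → ℝ) (σ : Fin n → Fin N → Matrix (Fin 2) (Fin 2) ℂ),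
      (∀ k, 0 ≤ p k) ∧ (∑ k, p k = 1) ∧
      (∀ k i, (σ k i).IsHermitian ∧ (σ k i).PosSemidef ∧ (σ k i).trace = 1) ∧
      ∀ θ φ : Fin N → ℝ,
        QfunN N ρ θ φ = ∑ k, (p k : ℂ) * ∏ i, Qfun (σ k i) (θ i) (φ i)) := by
  constructor
  · rintro ⟨n, p, σ, hp, hs, hd, hρ⟩
    exact ⟨n, p, σ, hp, hs, hd, fun θ φ => by rw [hρ, QfunN_sep]⟩
  · rintro ⟨n, p, σ, hp, hs, hd, hQ⟩
    refine ⟨n, p, σ, hp, hs, hd, ?_⟩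
    set ρ' := ∑ k, (p k : ℂ) • Matrix.of (fun (b b' : Fin N → Fin 2) => ∏ i, σ k i (b i) (b' i)) with hρ'
    have hc : (1 / (2 * Real.pi) : ℂ) ^ N ≠ 0 := by
      apply pow_ne_zero
      simp [Real.pi_ne_zero]
    have hSS : ∀ θ φ : Fin N → ℝ, S N ρ θ φ = S N ρ' θ φ := by
      intro θ φ
      have h1 : QfunN N ρ θ φ = QfunN N ρ' θ φ := by rw [hQ θ φ, hρ', QfunN_sep]
      rw [QfunN_eq, QfunN_eq] at h1
      exact mul_left_cancel₀ hc h1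
    have : ρ - ρ' = 0 := by
      apply S_inj
      intro θ φ
      rw [S_sub, hSS θ φ, sub_self]
    rw [sub_eq_zero] at this
    exact this
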